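/- Let f₀, f₁ be n × n complex matrices, r = rank(f₁), and for t > 0 set f[t] = f₀ + t·f₁. Suppose f[t] is invertible for all t > 0 and define ρ(t) = ln|det f[t]|. Then for all t ≥ 1 we have ρ(t) ≤ r·ln t + n · max{0, ln(2‖f₀‖ + ‖f₁‖)}. -/

import Mathlib

open scoped Matrix.Norms.L2Operator ComplexOrder
open Matrix

variable {n : ℕ}

lemma eig_le' (B : Matrix (Fin n) (Fin n) ℂ) (hB : B.IsHermitian) (i : Fin n) :
    |hB.eigenvalues i| ≤ ‖B‖ := by
  set v := hB.eigenvectorBasis i with hv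
  have hnorm : ‖v‖ = 1 := hB.eigenvectorBasis.orthonormal.1 i
  have h1 := Matrix.l2_opNorm_mulVec B v
  have key : B.mulVec v = hB.eigenvalues i • (WithLp.equiv 2 _ v) :=
    hB.mulVec_eigenvectorBasis i
  rw [key] at h1
  have h2 : ‖(EuclideanSpace.equiv (Fin n) ℂ).symm (hB.eigenvalues i • (WithLp.equiv 2 _ v))‖
      = |hB.eigenvalues i| * ‖v‖ := by
    have : (EuclideanSpace.equiv (Fin n) ℂ).symm (hB.eigenvalues i • (WithLp.equiv 2 _ v))
        = hB.eigenvalues i • v := rfl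
    rw [this, norm_smul, Real.norm_eq_abs]
  rw [h2, hnorm, mul_one] at h1
  simpa [hnorm] using h1

lemma abs_det_le' (A : Matrix (Fin n) (Fin n) ℂ) :
    ‖A.det‖ ≤ ‖A‖ ^ n := by
  have hB : (Aᴴ * A).IsHermitian := Matrix.isHermitian_conjTranspose_mul_self A
  have hdet : (Aᴴ * A).det = ∏ i, (hB.eigenvalues i : ℂ) := hB.det_eq_prod_eigenvalues
  have h1 : ‖A.det‖ ^ 2 = ‖(Aᴴ * A).det‖ := by
    rw [Matrix.det_mul, Matrix.det_conjTranspose, norm_mul,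
      show (star A.det) = (starRingEnd ℂ) A.det from rfl, Complex.norm_conj, sq]
  have h2 : ‖(Aᴴ * A).det‖ ≤ ‖A‖ ^ (2 * n) := by
    rw [hdet, norm_prod]
    calc ∏ i, ‖(hB.eigenvalues i : ℂ)‖
        ≤ ∏ _i : Fin n, ‖Aᴴ * A‖ := by
          apply Finset.prod_le_prod
          · intro i _; positivity
          · intro i _
            rw [Complex.norm_real, Real.norm_eq_abs]
            exact eig_le' _ hB i
      _ = ‖Aᴴ * A‖ ^ n := by rw [Finset.prod_const, Finset.card_univ, Fintype.card_fin]
      _ = (‖A‖ * ‖A‖) ^ n := by rw [Matrix.l2_opNorm_conjTranspose_mul_self]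
      _ = ‖A‖ ^ (2 * n) := by rw [two_mul, pow_add, mul_pow]
  nlinarith [norm_nonneg A.det, norm_nonneg A, pow_nonneg (norm_nonneg A) n,
    sq_nonneg (‖A.det‖ - ‖A‖ ^ n),
    (by rw [two_mul, pow_add] : ‖A‖ ^ (2*n) = ‖A‖ ^ n * ‖A‖ ^ n)]

lemma proj_norm_le (P : Matrix (Fin n) (Fin n) ℂ) (h1 : star P = P) (h2 : P * P = P) :
    ‖P‖ ≤ 1 := by
  have := CStarRing.norm_star_mul_self (x := P)
  rw [h1, h2] at this
  nlinarith [norm_nonneg P]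

/-- Large-time estimate: if `f[t] = f₀ + t·f₁` is invertible for all `t > 0`,
`r = rank f₁` and `ρ(t) = ln|det f[t]|`, then for `t ≥ 1` we have
`ρ(t) ≤ r·ln t + n · max{0, ln(2‖f₀‖ + ‖f₁‖)}`. -/
theorem stmt6 (n : ℕ) (f₀ f₁ : Matrix (Fin n) (Fin n) ℂ)
    (hinv : ∀ t : ℝ, 0 < t → IsUnit (f₀ + (t : ℂ) • f₁))
    (t : ℝ) (ht : 1 ≤ t) :
    Real.log ‖(f₀ + (t : ℂ) • f₁).det‖
      ≤ (f₁.rank : ℝ) * Real.log t + (n : ℝ) * max 0 (Real.log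
          (2 * ‖Matrix.toEuclideanCLM (𝕜 := ℂ) f₀‖ +
           ‖Matrix.toEuclideanCLM (𝕜 := ℂ) f₁‖)) := by
  rw [← Matrix.cstar_norm_def, ← Matrix.cstar_norm_def]
  have ht0 : (0:ℝ) < t := lt_of_lt_of_le one_pos ht
  have htC : (t:ℂ) ≠ 0 := by exact_mod_cast ne_of_gt ht0
  have hC : (f₁ * f₁ᴴ).IsHermitian := Matrix.isHermitian_mul_conjTranspose_self f₁
  set μ : Fin n → ℝ := hC.eigenvalues with hμ
  set U : Matrix (Fin n) (Fin n) ℂ := (hC.eigenvectorUnitary : Matrix (Fin n) (Fin n) ℂ) with hU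
  have hUU : U * star U = 1 := Matrix.mem_unitaryGroup_iff.mp hC.eigenvectorUnitary.2
  have hUU' : star U * U = 1 := Matrix.mem_unitaryGroup_iff'.mp hC.eigenvectorUnitary.2
  set M : Matrix (Fin n) (Fin n) ℂ :=
    Matrix.diagonal (fun i => if μ i = 0 then (1:ℂ) else 0) with hM
  have hMstar : star M = M := by
    rw [hM, Matrix.star_eq_conjTranspose, Matrix.diagonal_conjTranspose]
    ext i j
    by_cases h : μ i = 0 <;> simp [Matrix.diagonal_apply, h]
  have hMM : M * M = M := by
    rw [hM, Matrix.diagonal_mul_diagonal]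
    ext i j
    by_cases h : μ i = 0 <;> simp [Matrix.diagonal_apply, h]
  -- rows of `star U * f₁` with zero eigenvalue vanish
  have hrow : M * (star U * f₁) = 0 := by
    rw [← Matrix.self_mul_conjTranspose_eq_zero]
    have hdiag : star U * (f₁ * f₁ᴴ) * U = Matrix.diagonal ((↑) ∘ μ) :=
      by
        have := hC.conjStarAlgAut_star_eigenvectorUnitary
        rw [Unitary.conjStarAlgAut_apply] at this
        simpa [hU, hμ] using this
    have expand : (M * (star U * f₁)) * (M * (star U * f₁))ᴴ
        = M * (star U * (f₁ * f₁ᴴ) * U) * Mᴴ := by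
      rw [Matrix.conjTranspose_mul, Matrix.conjTranspose_mul,
        Matrix.star_eq_conjTranspose U, Matrix.conjTranspose_conjTranspose]
      simp only [Matrix.mul_assoc]
    rw [expand, hdiag, ← Matrix.star_eq_conjTranspose, hMstar, hM,
      Matrix.diagonal_mul_diagonal, Matrix.diagonal_mul_diagonal]
    ext i j
    by_cases h : μ i = 0 <;> simp [Matrix.diagonal_apply, h]
  -- the rescaling matrices
  set D : Matrix (Fin n) (Fin n) ℂ :=
    U * Matrix.diagonal (fun i => if μ i = 0 then 1 else (t:ℂ)) * star U with hD
  set D' : Matrix (Fin n) (Fin n) ℂ :=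
    U * Matrix.diagonal (fun i => if μ i = 0 then 1 else (t:ℂ)⁻¹) * star U with hD'
  -- D * D' = 1
  have hDD' : D * D' = 1 := by
    rw [hD, hD']
    calc U * Matrix.diagonal (fun i => if μ i = 0 then 1 else (t:ℂ)) * star U *
          (U * Matrix.diagonal (fun i => if μ i = 0 then 1 else (t:ℂ)⁻¹) * star U)
        = U * (Matrix.diagonal (fun i => if μ i = 0 then 1 else (t:ℂ)) * (star U * U) *
            Matrix.diagonal (fun i => if μ i = 0 then 1 else (t:ℂ)⁻¹)) * star U := by
          simp only [Matrix.mul_assoc]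
      _ = 1 := by
          rw [hUU', Matrix.mul_one, Matrix.diagonal_mul_diagonal]
          have : (fun i => (if μ i = 0 then 1 else (t:ℂ)) * (if μ i = 0 then 1 else (t:ℂ)⁻¹))
              = fun _ => (1:ℂ) := by
            funext i
            by_cases h : μ i = 0 <;> simp [h, mul_inv_cancel₀ htC]
          rw [this, Matrix.diagonal_one, Matrix.mul_one, hUU]
  -- determinant of D
  have hdetU : U.det * (star U).det = 1 := by
    rw [← Matrix.det_mul, hUU, Matrix.det_one]
  have hdetD : D.det = (t:ℂ) ^ f₁.rank := by
    have h1 : D.det = (Matrix.diagonal (fun i => if μ i = 0 then 1 else (t:ℂ))).det := by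
      rw [hD, Matrix.det_mul, Matrix.det_mul]
      calc U.det * (Matrix.diagonal (fun i => if μ i = 0 then 1 else (t:ℂ))).det * (star U).det
          = (Matrix.diagonal (fun i => if μ i = 0 then 1 else (t:ℂ))).det
            * (U.det * (star U).det) := by ring
        _ = _ := by rw [hdetU, mul_one]
    rw [h1, Matrix.det_diagonal]
    have hrank : f₁.rank = (Finset.univ.filter (fun i => ¬ μ i = 0)).card := by
      rw [← Matrix.rank_self_mul_conjTranspose f₁, hC.rank_eq_card_non_zero_eigs,
        Fintype.card_subtype]
    rw [hrank, Finset.prod_ite, Finset.prod_const, Finset.prod_const, one_pow, one_mul]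
  -- D' * f₁ = t⁻¹ • f₁
  have hdiagE : Matrix.diagonal (fun i => if μ i = 0 then 1 else (t:ℂ)⁻¹)
      = (t:ℂ)⁻¹ • (1 : Matrix (Fin n) (Fin n) ℂ) + (1 - (t:ℂ)⁻¹) • M := by
    rw [hM]
    ext i j
    rcases eq_or_ne i j with rfl | hij
    · by_cases h : μ i = 0 <;> simp [Matrix.diagonal_apply, Matrix.one_apply, h] <;> ring
    · simp [Matrix.diagonal_apply, Matrix.one_apply, hij]
  have hD'f₁ : D' * f₁ = (t:ℂ)⁻¹ • f₁ := by
    have step1 : D' * f₁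
        = U * (Matrix.diagonal (fun i => if μ i = 0 then 1 else (t:ℂ)⁻¹) * (star U * f₁)) := by
      rw [hD']; simp only [Matrix.mul_assoc]
    rw [step1, hdiagE, Matrix.add_mul, Matrix.smul_mul, Matrix.smul_mul, Matrix.one_mul,
      hrow, smul_zero, add_zero, Matrix.mul_smul, ← Matrix.mul_assoc, hUU, Matrix.one_mul]
  -- norm bound on D'
  have hnormU : ‖U‖ ≤ 1 := by
    have h1 := CStarRing.norm_star_mul_self (x := U)
    rw [hUU'] at h1
    have hone : ‖(1 : Matrix (Fin n) (Fin n) ℂ)‖ ≤ 1 := by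
      rw [Matrix.cstar_norm_def, _root_.map_one]
      exact ContinuousLinearMap.norm_id_le
    nlinarith [norm_nonneg U]
  have hnormSU : ‖star U‖ ≤ 1 := by
    rw [Matrix.star_eq_conjTranspose, Matrix.l2_opNorm_conjTranspose]
    exact hnormU
  have hnormM : ‖M‖ ≤ 1 := proj_norm_le M hMstar hMM
  have htinv : |t⁻¹| ≤ 1 := by
    rw [abs_of_nonneg (by positivity)]
    exact inv_le_one_of_one_le₀ ht
  have hnormdiagE : ‖Matrix.diagonal (fun i => if μ i = 0 then 1 else (t:ℂ)⁻¹)‖ ≤ 2 := by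
    rw [hdiagE]
    calc ‖(t:ℂ)⁻¹ • (1 : Matrix (Fin n) (Fin n) ℂ) + (1 - (t:ℂ)⁻¹) • M‖
        ≤ ‖(t:ℂ)⁻¹ • (1 : Matrix (Fin n) (Fin n) ℂ)‖ + ‖(1 - (t:ℂ)⁻¹) • M‖ := norm_add_le _ _
      _ ≤ ‖(t:ℂ)⁻¹‖ * ‖(1 : Matrix (Fin n) (Fin n) ℂ)‖ + ‖(1:ℂ) - (t:ℂ)⁻¹‖ * ‖M‖ := by
          rw [norm_smul, norm_smul]
      _ ≤ 1 * 1 + 1 * 1 := by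
          have hone : ‖(1 : Matrix (Fin n) (Fin n) ℂ)‖ ≤ 1 := by
            rw [Matrix.cstar_norm_def, _root_.map_one]
            exact ContinuousLinearMap.norm_id_le
          have e1 : ‖(t:ℂ)⁻¹‖ ≤ 1 := by
            rw [← Complex.ofReal_inv, Complex.norm_real, Real.norm_eq_abs]
            exact htinv
          have e2 : ‖(1:ℂ) - (t:ℂ)⁻¹‖ ≤ 1 := by
            rw [← Complex.ofReal_one, ← Complex.ofReal_inv, ← Complex.ofReal_sub,
              Complex.norm_real, Real.norm_eq_abs, abs_of_nonneg]
            · have : (0:ℝ) < t⁻¹ := by positivity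
              linarith [inv_le_one_of_one_le₀ ht]
            · have := inv_le_one_of_one_le₀ ht
              linarith
          exact add_le_add (mul_le_mul e1 hone (norm_nonneg _) one_pos.le)
            (mul_le_mul e2 hnormM (norm_nonneg _) one_pos.le)
      _ = 2 := by norm_num
  have hnormD' : ‖D'‖ ≤ 2 := by
    calc ‖D'‖ ≤ ‖U * Matrix.diagonal (fun i => if μ i = 0 then 1 else (t:ℂ)⁻¹)‖ * ‖star U‖ :=
          norm_mul_le _ _
      _ ≤ ‖U‖ * ‖Matrix.diagonal (fun i => if μ i = 0 then 1 else (t:ℂ)⁻¹)‖ * ‖star U‖ := by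
          gcongr
          exact norm_mul_le _ _
      _ ≤ 1 * 2 * 1 :=
          mul_le_mul (mul_le_mul hnormU hnormdiagE (norm_nonneg _) one_pos.le) hnormSU
            (norm_nonneg _) (by norm_num)
      _ = 2 := by norm_num
  -- E
  set E : Matrix (Fin n) (Fin n) ℂ := D' * (f₀ + (t:ℂ) • f₁) with hE
  have hEeq : E = D' * f₀ + f₁ := by
    rw [hE, Matrix.mul_add, Matrix.mul_smul, hD'f₁, smul_smul, mul_inv_cancel₀ htC, one_smul]
  have hnormE : ‖E‖ ≤ 2 * ‖f₀‖ + ‖f₁‖ := by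
    rw [hEeq]
    calc ‖D' * f₀ + f₁‖ ≤ ‖D' * f₀‖ + ‖f₁‖ := norm_add_le _ _
      _ ≤ ‖D'‖ * ‖f₀‖ + ‖f₁‖ := by gcongr; exact norm_mul_le _ _
      _ ≤ 2 * ‖f₀‖ + ‖f₁‖ := by gcongr
  -- factorization of det
  have hfact : (f₀ + (t:ℂ) • f₁).det = D.det * E.det := by
    rw [← Matrix.det_mul, hE, ← Matrix.mul_assoc, hDD', Matrix.one_mul]
  -- positivity of |det E|
  have hdetne : (f₀ + (t:ℂ) • f₁).det ≠ 0 := by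
    have := (Matrix.isUnit_iff_isUnit_det _).mp (hinv t ht0)
    exact IsUnit.ne_zero this
  have hdetEne : ‖E.det‖ ≠ 0 := by
    intro h
    apply hdetne
    rw [hfact]
    have : E.det = 0 := by simpa using h
    rw [this, mul_zero]
  have hdetEpos : 0 < ‖E.det‖ :=
    lt_of_le_of_ne (norm_nonneg _) (Ne.symm hdetEne)
  -- put it together
  set c : ℝ := 2 * ‖f₀‖ + ‖f₁‖ with hc
  have hcnonneg : 0 ≤ c := by positivity
  have hmaxlog : Real.log (max 1 c) = max 0 (Real.log c) := by
    rcases le_total c 1 with h | h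
    · rw [max_eq_left h, Real.log_one, max_eq_left (Real.log_nonpos hcnonneg h)]
    · rw [max_eq_right h, max_eq_right (Real.log_nonneg h)]
  have habs : ‖(f₀ + (t:ℂ) • f₁).det‖ = t ^ f₁.rank * ‖E.det‖ := by
    rw [hfact, norm_mul, hdetD, ← Complex.ofReal_pow, Complex.norm_real, Real.norm_eq_abs,
      abs_of_pos (pow_pos ht0 _)]
  rw [habs, Real.log_mul (by positivity) hdetEne, Real.log_pow]
  apply add_le_add_right
  calc Real.log ‖E.det‖ ≤ Real.log ((max 1 c) ^ n) := by
        apply Real.log_le_log hdetEpos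
        calc ‖E.det‖ ≤ ‖E‖ ^ n := abs_det_le' E
          _ ≤ (max 1 c) ^ n :=
              pow_le_pow_left₀ (norm_nonneg _) (hnormE.trans (le_max_right _ _)) n
    _ = n * Real.log (max 1 c) := by rw [Real.log_pow]
    _ = n * max 0 (Real.log c) := by rw [hmaxlog]
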